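/- Fix μ ∈ [0,1] and define D_z := A⁽¹⁾⊗A⁽¹⁾ − A⁽⁻¹⁾⊗A⁽⁻¹⁾ (the transfer-matrix insertion corresponding to the spin-1 operator Ŝᶻ = diag(1,0,−1)). Then for every integer r ≥ 1, lim_{L→∞} Tr[D_z · T(μ)^{r−1} · D_z · T(μ)^{L−r−1}] / Tr[T(μ)^L] = (4/3)·(λ₋(μ)/λ₊(μ))^r. (This is the longitudinal spin-spin correlation function ⟨Ŝᶻ_j Ŝᶻ_{j+r}⟩ in the infinite-volume S=1 asymmetric VBS state.) -/

import Mathlib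

open Matrix Kronecker Filter

/-- The matrix `A⁽¹⁾` of the S=1 asymmetric VBS state. -/
noncomputable def A1 (μ : ℝ) : Matrix (Fin 2) (Fin 2) ℝ := !![0, 0; -Real.sqrt μ, 0]

/-- The matrix `A⁽⁰⁾` of the S=1 asymmetric VBS state. -/
noncomputable def A0 (μ : ℝ) : Matrix (Fin 2) (Fin 2) ℝ :=
  (1 / Real.sqrt 2) • !![1, 0; 0, -μ]

/-- The matrix `A⁽⁻¹⁾` of the S=1 asymmetric VBS state. -/
noncomputable def Am1 (μ : ℝ) : Matrix (Fin 2) (Fin 2) ℝ := !![0, Real.sqrt μ; 0, 0]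

/-- The transfer matrix `T(μ)` of the S=1 asymmetric VBS state. -/
noncomputable def T (μ : ℝ) : Matrix (Fin 2 × Fin 2) (Fin 2 × Fin 2) ℝ :=
  A1 μ ⊗ₖ A1 μ + A0 μ ⊗ₖ A0 μ + Am1 μ ⊗ₖ Am1 μ

/-- The transfer-matrix insertion `D_z` corresponding to the spin-1 operator `Ŝᶻ`. -/
noncomputable def Dz (μ : ℝ) : Matrix (Fin 2 × Fin 2) (Fin 2 × Fin 2) ℝ :=
  A1 μ ⊗ₖ A1 μ - Am1 μ ⊗ₖ Am1 μ

/-- The eigenvalue `λ₊(μ)`. -/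
noncomputable def lamP (μ : ℝ) : ℝ := (μ ^ 2 + 1 + Real.sqrt (μ ^ 4 + 14 * μ ^ 2 + 1)) / 4

/-- The eigenvalue `λ₋(μ)`. -/
noncomputable def lamM (μ : ℝ) : ℝ := (μ ^ 2 + 1 - Real.sqrt (μ ^ 4 + 14 * μ ^ 2 + 1)) / 4

set_option linter.unnecessarySeqFocus false

def mk6 (w x y z u v : ℝ) : Matrix (Fin 2 × Fin 2) (Fin 2 × Fin 2) ℝ :=
  Matrix.of fun p q =>
    if p = (0,0) ∧ q = (0,0) then w
    else if p = (0,0) ∧ q = (1,1) then x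
    else if p = (1,1) ∧ q = (0,0) then y
    else if p = (1,1) ∧ q = (1,1) then z
    else if p = (0,1) ∧ q = (0,1) then u
    else if p = (1,0) ∧ q = (1,0) then v
    else 0

lemma mk6_mul (w x y z u v w' x' y' z' u' v' : ℝ) :
    mk6 w x y z u v * mk6 w' x' y' z' u' v' =
      mk6 (w*w' + x*y') (w*x' + x*z') (y*w' + z*y') (y*x' + z*z') (u*u') (v*v') := by
  ext ⟨i,j⟩ ⟨k,l⟩
  fin_cases i <;> fin_cases j <;> fin_cases k <;> fin_cases l <;>
    simp [mk6, Matrix.mul_apply, Fintype.sum_prod_type, Fin.sum_univ_two, Prod.ext_iff]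

lemma mk6_trace (w x y z u v : ℝ) : (mk6 w x y z u v).trace = w + z + u + v := by
  simp [Matrix.trace, Matrix.diag, mk6, Fintype.sum_prod_type, Fin.sum_univ_two, Prod.ext_iff]
  ring

lemma mk6_smul (r w x y z u v : ℝ) :
    r • mk6 w x y z u v = mk6 (r*w) (r*x) (r*y) (r*z) (r*u) (r*v) := by
  ext ⟨i,j⟩ ⟨k,l⟩
  fin_cases i <;> fin_cases j <;> fin_cases k <;> fin_cases l <;>
    simp [mk6, Prod.ext_iff]

lemma mk6_one : (1 : Matrix (Fin 2 × Fin 2) (Fin 2 × Fin 2) ℝ) = mk6 1 0 0 1 1 1 := by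
  ext ⟨i,j⟩ ⟨k,l⟩
  fin_cases i <;> fin_cases j <;> fin_cases k <;> fin_cases l <;>
    simp [mk6, Matrix.one_apply, Prod.ext_iff]

lemma mk6_congr {w x y z u v w' x' y' z' u' v' : ℝ} (h1 : w = w') (h2 : x = x')
    (h3 : y = y') (h4 : z = z') (h5 : u = u') (h6 : v = v') :
    mk6 w x y z u v = mk6 w' x' y' z' u' v' := by rw [h1, h2, h3, h4, h5, h6]

lemma T_eq (μ : ℝ) (hμ : 0 ≤ μ) :
    T μ = mk6 (1/2) μ μ (μ^2/2) (-μ/2) (-μ/2) := by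
  have h2 : Real.sqrt 2 * Real.sqrt 2 = 2 := Real.mul_self_sqrt (by norm_num)
  have hm : Real.sqrt μ * Real.sqrt μ = μ := Real.mul_self_sqrt hμ
  have h2' : Real.sqrt 2 ≠ 0 := by positivity
  ext ⟨i,j⟩ ⟨k,l⟩
  fin_cases i <;> fin_cases j <;> fin_cases k <;> fin_cases l <;>
    simp [T, A1, A0, Am1, mk6, Prod.ext_iff, kroneckerMap_apply] <;>
    (try field_simp) <;> nlinarith [hm, h2]

lemma Dz_eq (μ : ℝ) (hμ : 0 ≤ μ) :
    Dz μ = mk6 0 (-μ) μ 0 0 0 := by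
  have hm : Real.sqrt μ * Real.sqrt μ = μ := Real.mul_self_sqrt hμ
  ext ⟨i,j⟩ ⟨k,l⟩
  fin_cases i <;> fin_cases j <;> fin_cases k <;> fin_cases l <;>
    simp [Dz, A1, Am1, mk6, Prod.ext_iff, kroneckerMap_apply] <;> nlinarith [hm]

lemma lam_add (μ : ℝ) : lamP μ + lamM μ = (μ^2+1)/2 := by unfold lamP lamM; ring

lemma lam_mul (μ : ℝ) : lamP μ * lamM μ = -3*μ^2/4 := by
  have hs : Real.sqrt (μ ^ 4 + 14 * μ ^ 2 + 1) ^ 2 = μ ^ 4 + 14 * μ ^ 2 + 1 :=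
    Real.sq_sqrt (by positivity)
  unfold lamP lamM
  linear_combination (-1/16) * hs

lemma lam_sub_pos (μ : ℝ) : 0 < lamP μ - lamM μ := by
  have hs : 1 ≤ Real.sqrt (μ ^ 4 + 14 * μ ^ 2 + 1) := by
    nlinarith [Real.sq_sqrt (show (0:ℝ) ≤ μ^4+14*μ^2+1 by positivity),
      Real.sqrt_nonneg (μ^4+14*μ^2+1), sq_nonneg μ, sq_nonneg (μ^2)]
  unfold lamP lamM; linarith

lemma lamP_pos (μ : ℝ) : 0 < lamP μ := by
  have h0 : 0 ≤ Real.sqrt (μ ^ 4 + 14 * μ ^ 2 + 1) := Real.sqrt_nonneg _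
  unfold lamP; nlinarith [sq_nonneg μ]

lemma lamP_ge (μ : ℝ) : (μ^2+1)/2 ≤ lamP μ := by
  have hs : μ^2 + 1 ≤ Real.sqrt (μ ^ 4 + 14 * μ ^ 2 + 1) := by
    rw [show μ^2+1 = Real.sqrt ((μ^2+1)^2) by rw [Real.sqrt_sq (by positivity)]]
    exact Real.sqrt_le_sqrt (by nlinarith [sq_nonneg μ])
  unfold lamP; linarith

lemma abs_lamM_lt (μ : ℝ) : |lamM μ| < lamP μ := by
  have h1 := lam_sub_pos μ
  have h2 : 0 < lamP μ + lamM μ := by rw [lam_add]; positivity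
  rw [abs_lt]; constructor <;> linarith

lemma abs_c_lt (μ : ℝ) (h0 : 0 ≤ μ) : |(-μ/2)| < lamP μ := by
  have h2 := lamP_ge μ
  rw [abs_of_nonpos (by linarith)]
  nlinarith [sq_nonneg (μ-1)]

/-- entries of the `k`-th power of `T`, scaled by `lamP - lamM`. -/
noncomputable def Wk (μ : ℝ) (k : ℕ) : ℝ :=
  lamP μ ^ k * (1/2 - lamM μ) + lamM μ ^ k * (lamP μ - 1/2)
noncomputable def Xk (μ : ℝ) (k : ℕ) : ℝ := μ * (lamP μ ^ k - lamM μ ^ k)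
noncomputable def Zk (μ : ℝ) (k : ℕ) : ℝ :=
  lamP μ ^ k * (μ^2/2 - lamM μ) + lamM μ ^ k * (lamP μ - μ^2/2)
noncomputable def Uk (μ : ℝ) (k : ℕ) : ℝ := (lamP μ - lamM μ) * (-μ/2) ^ k

lemma Tpow (μ : ℝ) (hμ : 0 ≤ μ) (k : ℕ) :
    (lamP μ - lamM μ) • T μ ^ k = mk6 (Wk μ k) (Xk μ k) (Xk μ k) (Zk μ k) (Uk μ k) (Uk μ k) := by
  induction k with
  | zero =>
      rw [pow_zero, mk6_one, mk6_smul]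
      refine mk6_congr ?_ ?_ ?_ ?_ ?_ ?_ <;>
        (simp only [Wk, Xk, Zk, Uk, pow_zero]; try ring)
  | succ k ih =>
      rw [pow_succ, ← smul_mul_assoc, ih, T_eq μ hμ, mk6_mul]
      refine mk6_congr ?_ ?_ ?_ ?_ ?_ ?_
      · simp only [Wk, Xk, pow_succ]
        linear_combination ((lamM μ^k - lamP μ^k)/2) * lam_add μ +
          (lamP μ^k - lamM μ^k) * lam_mul μ
      · simp only [Wk, Xk, pow_succ]
        linear_combination (μ*(lamM μ^k - lamP μ^k)) * lam_add μ
      · simp only [Zk, Xk, pow_succ]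
        linear_combination (μ*(lamM μ^k - lamP μ^k)) * lam_add μ
      · simp only [Zk, Xk, pow_succ]
        linear_combination ((μ^2/2)*(lamM μ^k - lamP μ^k)) * lam_add μ +
          (lamP μ^k - lamM μ^k) * lam_mul μ
      · simp only [Uk, pow_succ]; ring
      · simp only [Uk, pow_succ]; ring

lemma trace_T_pow (μ : ℝ) (hμ : 0 ≤ μ) (L : ℕ) :
    (T μ ^ L).trace = lamP μ ^ L + lamM μ ^ L + 2 * (-μ/2) ^ L := by
  have hδ : lamP μ - lamM μ ≠ 0 := ne_of_gt (lam_sub_pos μ)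
  apply mul_left_cancel₀ hδ
  have h := congrArg Matrix.trace (Tpow μ hμ L)
  rw [Matrix.trace_smul, mk6_trace] at h
  simp only [smul_eq_mul] at h
  rw [h]
  simp only [Wk, Zk, Uk]
  linear_combination (lamM μ ^ L - lamP μ ^ L) * lam_add μ

lemma trace_num (μ : ℝ) (hμ : 0 ≤ μ) (j n : ℕ) :
    (Dz μ * T μ ^ j * Dz μ * T μ ^ n).trace =
      -μ^2 * (lamP μ ^ j * lamM μ ^ n + lamM μ ^ j * lamP μ ^ n) := by
  have hδ : lamP μ - lamM μ ≠ 0 := ne_of_gt (lam_sub_pos μ)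
  apply mul_left_cancel₀ (mul_ne_zero hδ hδ)
  rw [Dz_eq μ hμ]
  have key : mk6 0 (-μ) μ 0 0 0 * ((lamP μ - lamM μ) • T μ ^ j) *
        (mk6 0 (-μ) μ 0 0 0 * ((lamP μ - lamM μ) • T μ ^ n)) =
      ((lamP μ - lamM μ) * (lamP μ - lamM μ)) •
        (mk6 0 (-μ) μ 0 0 0 * T μ ^ j * mk6 0 (-μ) μ 0 0 0 * T μ ^ n) := by
    simp only [mul_smul_comm, smul_mul_assoc, smul_smul, mul_assoc]
  rw [Tpow μ hμ j, Tpow μ hμ n, mk6_mul, mk6_mul, mk6_mul] at key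
  have h := congrArg Matrix.trace key.symm
  rw [Matrix.trace_smul, mk6_trace] at h
  simp only [smul_eq_mul] at h
  rw [h]
  simp only [Wk, Xk, Zk, Uk]
  linear_combination (μ^2*(-2*(lamM μ)*(lamP μ^j*lamP μ^n) +
      (lamP μ + lamM μ)*(lamP μ^j*lamM μ^n + lamM μ^j*lamP μ^n) -
      2*(lamP μ)*(lamM μ^j*lamM μ^n))) * lam_add μ +
    (2*μ^2*(lamP μ^j*lamP μ^n - lamP μ^j*lamM μ^n - lamM μ^j*lamP μ^n +
      lamM μ^j*lamM μ^n)) * lam_mul μ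

private lemma vbs_div_helper (x y c : ℝ) (hc : c ≠ 0) : x / y = (x / c) / (y / c) := by
  rcases eq_or_ne y 0 with h | h
  · simp [h]
  · field_simp

private lemma vbs_num_eq (x A B : ℝ) (hA : A ≠ 0) (j m : ℕ) :
    (x * (A^j * B^m + B^j * A^m)) / A^m = x * A^j * (B/A)^m + x * B^j := by
  rw [div_pow]; field_simp

private lemma vbs_den_eq (A B C : ℝ) (hA : A ≠ 0) (k m : ℕ) :
    (A^(m+k) + B^(m+k) + 2*C^(m+k)) / A^m = A^k + B^k*(B/A)^m + 2*C^k*(C/A)^m := by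
  simp only [pow_add, div_pow]; field_simp

/-- The longitudinal spin-spin correlation function of the infinite-volume S=1
asymmetric VBS state: `⟨Ŝᶻ_j Ŝᶻ_{j+r}⟩ = (4/3)·(λ₋/λ₊)^r` for every `r ≥ 1`. -/
theorem zz_correlation_S1 (μ : ℝ) (hμ : μ ∈ Set.Icc (0 : ℝ) 1) (r : ℕ) (hr : 1 ≤ r) :
    Tendsto (fun L : ℕ =>
        (Dz μ * T μ ^ (r - 1) * Dz μ * T μ ^ (L - r - 1)).trace / (T μ ^ L).trace)
      atTop (nhds ((4 / 3) * (lamM μ / lamP μ) ^ r)) := by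
  obtain ⟨hμ0, hμ1⟩ := hμ
  obtain ⟨r', rfl⟩ : ∃ r', r = r' + 1 := ⟨r - 1, by omega⟩
  have ha0 : (0:ℝ) < lamP μ := lamP_pos μ
  have hane : lamP μ ≠ 0 := ne_of_gt ha0
  have hq : |lamM μ / lamP μ| < 1 := by
    rw [abs_div, div_lt_one (by rwa [abs_of_pos ha0]), abs_of_pos ha0]
    exact abs_lamM_lt μ
  have ht : |(-μ/2) / lamP μ| < 1 := by
    rw [abs_div, div_lt_one (by rwa [abs_of_pos ha0]), abs_of_pos ha0]
    exact abs_c_lt μ hμ0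
  rw [← tendsto_add_atTop_iff_nat (r' + 2)]
  have heq : ∀ m : ℕ,
      (Dz μ * T μ ^ (r' + 1 - 1) * Dz μ * T μ ^ ((m + (r' + 2)) - (r' + 1) - 1)).trace /
        (T μ ^ (m + (r' + 2))).trace =
      (-μ^2 * lamP μ ^ r' * (lamM μ / lamP μ)^m + -μ^2 * lamM μ ^ r') /
        (lamP μ^(r'+2) + lamM μ^(r'+2) * (lamM μ / lamP μ)^m +
          2 * (-μ/2)^(r'+2) * ((-μ/2) / lamP μ)^m) := by
    intro m
    have h1 : r' + 1 - 1 = r' := by omega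
    have h2 : (m + (r' + 2)) - (r' + 1) - 1 = m := by omega
    rw [h1, h2, trace_num μ hμ0, trace_T_pow μ hμ0,
      vbs_div_helper _ _ ((lamP μ) ^ m) (pow_ne_zero m hane)]
    congr 1
    · exact vbs_num_eq (-μ^2) _ _ hane r' m
    · exact vbs_den_eq _ _ _ hane (r'+2) m
  simp only [heq]
  have hq0 : Tendsto (fun m : ℕ => (lamM μ / lamP μ)^m) atTop (nhds 0) :=
    tendsto_pow_atTop_nhds_zero_iff.mpr hq
  have ht0 : Tendsto (fun m : ℕ => ((-μ/2) / lamP μ)^m) atTop (nhds 0) :=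
    tendsto_pow_atTop_nhds_zero_iff.mpr ht
  have hnum : Tendsto (fun m : ℕ => -μ^2 * lamP μ ^ r' * (lamM μ / lamP μ)^m +
      -μ^2 * lamM μ ^ r') atTop (nhds (-μ^2 * lamM μ ^ r')) := by
    have := (hq0.const_mul (-μ^2 * lamP μ ^ r')).add_const (-μ^2 * lamM μ ^ r')
    simpa using this
  have hden : Tendsto (fun m : ℕ => lamP μ^(r'+2) + lamM μ^(r'+2) * (lamM μ / lamP μ)^m +
      2 * (-μ/2)^(r'+2) * ((-μ/2) / lamP μ)^m) atTop (nhds (lamP μ^(r'+2))) := by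
    have := ((hq0.const_mul (lamM μ^(r'+2))).const_add (lamP μ^(r'+2))).add
      (ht0.const_mul (2 * (-μ/2)^(r'+2)))
    simpa using this
  have hlim := hnum.div hden (by positivity)
  convert hlim using 2
  · rfl
  have hμ2 : μ ^ 2 = -4/3 * lamP μ * lamM μ := by linarith [lam_mul μ]
  rw [div_pow, hμ2, eq_div_iff (pow_ne_zero _ hane)]
  field_simp
  ring
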